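/- arXiv:1511.06619 — 4 statements merged into one kernel-verified Lean document; each statement's English description precedes it below -/
import Mathlib

section
/- If f : [a,b] → ℝ is convex with a < b, then f((a+b)/2) ≤ (1/(b-a)) ∫_a^b f(x) dx ≤ (f(a)+f(b))/2. -/
open MeasureTheory intervalIntegral

theorem hermite_hadamard
    (f : ℝ → ℝ) (a b : ℝ) (hab : a < b)
    (hconv : ConvexOn ℝ (Set.Icc a b) f)
    (hint : IntervalIntegrable f MeasureTheory.volume a b) :
    f ((a + b) / 2) ≤ (1 / (b - a)) * ∫ x in a..b, f x ∧
      (1 / (b - a)) * ∫ x in a..b, f x ≤ (f a + f b) / 2 := by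
  have hba : (0:ℝ) < b - a := by linarith
  have hrefl : IntervalIntegrable (fun x => f (a + b - x)) volume a b := by
    simpa using (hint.comp_sub_left (a + b)).symm
  have hIrefl : (∫ x in a..b, f (a + b - x)) = ∫ x in a..b, f x := by
    have := intervalIntegral.integral_comp_sub_left f (a + b) (a := a) (b := b)
    simpa using this
  constructor
  · -- left inequality
    have hpt : ∀ x ∈ Set.Icc a b,
        f ((a + b) / 2) ≤ (f x + f (a + b - x)) / 2 := by
      intro x hx
      have hx' : a + b - x ∈ Set.Icc a b := by
        constructor <;> [linarith [hx.2]; linarith [hx.1]]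
      have := hconv.2 hx hx' (by norm_num : (0:ℝ) ≤ 1/2)
        (by norm_num : (0:ℝ) ≤ 1/2) (by norm_num)
      have hmid : (1/2 : ℝ) • x + (1/2 : ℝ) • (a + b - x) = (a + b) / 2 := by
        simp [smul_eq_mul]; ring
      rw [hmid] at this
      simp only [smul_eq_mul] at this
      linarith
    have hmono : (∫ _ in a..b, f ((a + b) / 2)) ≤
        ∫ x in a..b, (f x + f (a + b - x)) / 2 := by
      apply intervalIntegral.integral_mono_on hab.le
      · exact intervalIntegrable_const
      · exact ((hint.add hrefl).div_const 2)
      · intro x hx; exact hpt x hx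
    have hconst : (∫ _ in a..b, f ((a + b) / 2)) = (b - a) * f ((a + b) / 2) := by
      simp [smul_eq_mul]
    have hright : (∫ x in a..b, (f x + f (a + b - x)) / 2) = ∫ x in a..b, f x := by
      rw [intervalIntegral.integral_div, intervalIntegral.integral_add hint hrefl, hIrefl]
      ring
    rw [hconst, hright] at hmono
    rw [div_mul_eq_mul_div, le_div_iff₀ hba]
    linarith
  · -- right inequality
    have hpt : ∀ x ∈ Set.Icc a b,
        f x ≤ ((b - x) * f a + (x - a) * f b) / (b - a) := by
      intro x hx
      have h1 : (0:ℝ) ≤ (b - x) / (b - a) := by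
        apply div_nonneg <;> linarith [hx.2]
      have h2 : (0:ℝ) ≤ (x - a) / (b - a) := by
        apply div_nonneg <;> linarith [hx.1]
      have h3 : (b - x) / (b - a) + (x - a) / (b - a) = 1 := by
        field_simp; ring
      have := hconv.2 (Set.left_mem_Icc.2 hab.le) (Set.right_mem_Icc.2 hab.le) h1 h2 h3
      have hxeq : ((b - x) / (b - a)) • a + ((x - a) / (b - a)) • b = x := by
        rw [smul_eq_mul, smul_eq_mul, div_mul_eq_mul_div, div_mul_eq_mul_div, ← add_div,
          div_eq_iff hba.ne']; ring
      rw [hxeq] at this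
      calc f x ≤ (b - x) / (b - a) * f a + (x - a) / (b - a) * f b := by
            simpa [smul_eq_mul] using this
        _ = ((b - x) * f a + (x - a) * f b) / (b - a) := by ring
    have hmono : (∫ x in a..b, f x) ≤
        ∫ x in a..b, ((b - x) * f a + (x - a) * f b) / (b - a) := by
      apply intervalIntegral.integral_mono_on hab.le hint
      · apply IntervalIntegrable.div_const
        apply IntervalIntegrable.add
        · exact ((intervalIntegrable_const.sub intervalIntegrable_id).mul_const _)
        · exact ((intervalIntegrable_id.sub intervalIntegrable_const).mul_const _)
      · intro x hx; exact hpt x hx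
    have hval : (∫ x in a..b, ((b - x) * f a + (x - a) * f b) / (b - a))
        = (b - a) * ((f a + f b) / 2) := by
      have : (∫ x in a..b, ((b - x) * f a + (x - a) * f b) / (b - a))
          = ∫ x in a..b, (f a / (b - a)) * (b - x) + (f b / (b - a)) * (x - a) := by
        apply intervalIntegral.integral_congr
        intro x _; field_simp
      rw [this]
      rw [intervalIntegral.integral_add
        (((intervalIntegrable_const.sub intervalIntegrable_id)).const_mul _)
        (((intervalIntegrable_id.sub intervalIntegrable_const)).const_mul _)]
      rw [intervalIntegral.integral_const_mul, intervalIntegral.integral_const_mul,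
        intervalIntegral.integral_sub intervalIntegrable_const intervalIntegrable_id,
        intervalIntegral.integral_sub intervalIntegrable_id intervalIntegrable_const,
        integral_id, intervalIntegral.integral_const, intervalIntegral.integral_const]
      field_simp
      ring
    rw [hval] at hmono
    rw [div_mul_eq_mul_div, div_le_iff₀ hba, one_mul]
    nlinarith [hmono]
end

section
/- If f : [a,b] → ℝ is convex and g : [a,b] → ℝ is nonnegative, integrable, and symmetric about (a+b)/2 (i.e., g(a+b-x) = g(x) for all x ∈ [a,b]), then f((a+b)/2) ∫_a^b g(x) dx ≤ ∫_a^b f(x) g(x) dx ≤ ((f(a)+f(b))/2) ∫_a^b g(x) dx. -/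
open MeasureTheory intervalIntegral

theorem hermite_hadamard_fejer
    (f g : ℝ → ℝ) (a b : ℝ) (hab : a < b)
    (hconv : ConvexOn ℝ (Set.Icc a b) f)
    (hg_nonneg : ∀ x ∈ Set.Icc a b, 0 ≤ g x)
    (hg_int : IntervalIntegrable g MeasureTheory.volume a b)
    (hfg_int : IntervalIntegrable (fun x => f x * g x) MeasureTheory.volume a b)
    (hg_symm : ∀ x ∈ Set.Icc a b, g (a + b - x) = g x) :
    f ((a + b) / 2) * ∫ x in a..b, g x ≤ ∫ x in a..b, f x * g x ∧
      ∫ x in a..b, f x * g x ≤ ((f a + f b) / 2) * ∫ x in a..b, g x := by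
  have hab' : a ≤ b := hab.le
  have hmem : ∀ x ∈ Set.Icc a b, a + b - x ∈ Set.Icc a b := by
    intro x hx
    exact ⟨by linarith [hx.2], by linarith [hx.1]⟩
  -- integrability of reflected product
  have hF1 : IntervalIntegrable (fun x => f (a + b - x) * g (a + b - x))
      MeasureTheory.volume a b := by
    have := (hfg_int.comp_sub_left (a + b)).symm
    simpa using this
  have hF2 : IntervalIntegrable (fun x => f (a + b - x) * g x)
      MeasureTheory.volume a b := by
    rw [intervalIntegrable_iff] at hF1 ⊢
    refine hF1.congr_fun (fun x hx => ?_) measurableSet_uIoc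
    rw [Set.uIoc_of_le hab'] at hx
    show f (a + b - x) * g (a + b - x) = _
    rw [hg_symm x ⟨hx.1.le, hx.2⟩]
  -- key reflection identity
  have key : (∫ x in a..b, f (a + b - x) * g x) = ∫ x in a..b, f x * g x := by
    have h2 : (∫ x in a..b, f (a + b - x) * g (a + b - x)) = ∫ x in a..b, f x * g x := by
      have := intervalIntegral.integral_comp_sub_left (a := a) (b := b)
        (fun y => f y * g y) (a + b)
      simpa using this
    have h3 : (∫ x in a..b, f (a + b - x) * g (a + b - x))
        = ∫ x in a..b, f (a + b - x) * g x := by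
      refine intervalIntegral.integral_congr (fun x hx => ?_)
      rw [Set.uIcc_of_le hab'] at hx
      rw [hg_symm x hx]
    rw [← h3, h2]
  set I := ∫ x in a..b, g x with hI
  set J := ∫ x in a..b, f x * g x with hJ
  -- pointwise bounds
  have hlow : ∀ x ∈ Set.Icc a b,
      2 * f ((a + b) / 2) * g x ≤ f x * g x + f (a + b - x) * g x := by
    intro x hx
    have hx2 := hmem x hx
    have hc := hconv.2 hx hx2 (by norm_num : (0:ℝ) ≤ 1/2) (by norm_num : (0:ℝ) ≤ 1/2)
      (by norm_num)
    have harg : (1/2 : ℝ) • x + (1/2 : ℝ) • (a + b - x) = (a + b) / 2 := by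
      simp [smul_eq_mul]; ring
    rw [harg] at hc
    simp only [smul_eq_mul] at hc
    have hg0 := hg_nonneg x hx
    nlinarith [hc, hg0]
  have hhigh : ∀ x ∈ Set.Icc a b,
      f x * g x + f (a + b - x) * g x ≤ (f a + f b) * g x := by
    intro x hx
    set t : ℝ := (b - x) / (b - a) with ht
    have hba : (0:ℝ) < b - a := by linarith
    have ht0 : 0 ≤ t := div_nonneg (by linarith [hx.2]) hba.le
    have ht1 : t ≤ 1 := by
      rw [ht, div_le_one hba]; linarith [hx.1]
    have hsum : t + (1 - t) = 1 := by ring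
    have hx1 : t • a + (1 - t) • b = x := by
      simp only [smul_eq_mul, ht]
      field_simp
      ring
    have hx2 : (1 - t) • a + t • b = a + b - x := by
      simp only [smul_eq_mul, ht]
      field_simp
      ring
    have hca := hconv.2 (Set.left_mem_Icc.2 hab') (Set.right_mem_Icc.2 hab') ht0
      (by linarith) hsum
    rw [hx1] at hca
    have hcb := hconv.2 (Set.left_mem_Icc.2 hab') (Set.right_mem_Icc.2 hab')
      (by linarith : (0:ℝ) ≤ 1 - t) ht0 (by ring)
    rw [hx2] at hcb
    simp only [smul_eq_mul] at hca hcb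
    have hg0 := hg_nonneg x hx
    nlinarith [hca, hcb, hg0]
  -- integral versions
  have hconst_low : IntervalIntegrable (fun x => 2 * f ((a + b) / 2) * g x)
      MeasureTheory.volume a b := hg_int.const_mul _
  have hconst_high : IntervalIntegrable (fun x => (f a + f b) * g x)
      MeasureTheory.volume a b := hg_int.const_mul _
  have hsum_int : IntervalIntegrable (fun x => f x * g x + f (a + b - x) * g x)
      MeasureTheory.volume a b := hfg_int.add hF2
  have hIL := intervalIntegral.integral_mono_on hab' hconst_low hsum_int hlow
  have hIH := intervalIntegral.integral_mono_on hab' hsum_int hconst_high hhigh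
  rw [intervalIntegral.integral_const_mul] at hIL hIH
  rw [intervalIntegral.integral_add hfg_int hF2, key] at hIL hIH
  constructor
  · nlinarith [hIL]
  · nlinarith [hIH]
end

section
/- Specializing h(x) = x in the generalized bound: let f be differentiable on (a,b) with |f'| convex on [a,b], g continuous, α > 0. Then |f((a+b)/2)[J_{((a+b)/2)-}^α g(a) + J_{((a+b)/2)+}^α g(b)] − [J_{((a+b)/2)-}^α (gf)(a) + J_{((a+b)/2)+}^α (gf)(b)]| ≤ (‖g‖_{∞,[a,(a+b)/2]}/((b-a)Γ(α+1))) { |f'(a)| [ ((b-a)/2)^{α+1}(b-a)/(α+1) − ((b-a)/2)^{α+2}/(α+2) ] + |f'(b)| ((b-a)/2)^{α+2}/(α+2) } + (‖g‖_{∞,[(a+b)/2,b]}/((b-a)Γ(α+1))) { |f'(b)| [ ((b-a)/2)^{α+1}(b-a)/(α+1) − ((b-a)/2)^{α+2}/(α+2) ] + |f'(a)| ((b-a)/2)^{α+2}/(α+2) }. -/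
open Set MeasureTheory intervalIntegral

lemma chord_bound {f' : ℝ → ℝ} {a b : ℝ} (hab : a < b)
    (hconv : ConvexOn ℝ (Set.Icc a b) (fun x => |f' x|)) :
    ∀ s ∈ Set.Icc a b, |f' s| ≤ ((b - s) * |f' a| + (s - a) * |f' b|) / (b - a) := by
  intro s hs
  have hba : (0:ℝ) < b - a := by linarith
  have h1 : (0:ℝ) ≤ (b - s) / (b - a) := by
    apply div_nonneg (by linarith [hs.2]) hba.le
  have h2 : (0:ℝ) ≤ (s - a) / (b - a) := by
    apply div_nonneg (by linarith [hs.1]) hba.le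
  have h3 : (b - s) / (b - a) + (s - a) / (b - a) = 1 := by field_simp; ring
  have := hconv.2 (Set.left_mem_Icc.2 hab.le) (Set.right_mem_Icc.2 hab.le) h1 h2 h3
  simp only [smul_eq_mul] at this
  have hs' : (b - s) / (b - a) * a + (s - a) / (b - a) * b = s := by field_simp; ring
  rw [hs'] at this
  calc |f' s| ≤ (b - s) / (b - a) * |f' a| + (s - a) / (b - a) * |f' b| := this
    _ = ((b - s) * |f' a| + (s - a) * |f' b|) / (b - a) := by ring

lemma rpow_poly_int {α : ℝ} (hα : 0 < α) {h : ℝ} (hh : 0 ≤ h) (c₀ c₁ c₂ : ℝ) :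
    ∫ u in (0:ℝ)..h, u ^ (α - 1) * (c₀ + c₁ * u + c₂ * u ^ 2) =
      c₀ * h ^ α / α + c₁ * h ^ (α + 1) / (α + 1) + c₂ * h ^ (α + 2) / (α + 2) := by
  have hα1 : (-1:ℝ) < α - 1 := by linarith
  have i0 : IntervalIntegrable (fun u : ℝ => u ^ (α - 1)) volume 0 h :=
    intervalIntegral.intervalIntegrable_rpow' hα1
  have i1 : IntervalIntegrable (fun u : ℝ => u ^ (α - 1) * u) volume 0 h :=
    i0.mul_continuousOn continuous_id.continuousOn
  have i2 : IntervalIntegrable (fun u : ℝ => u ^ (α - 1) * u ^ 2) volume 0 h :=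
    i0.mul_continuousOn (continuous_pow 2).continuousOn
  have e0 : ∫ u in (0:ℝ)..h, u ^ (α - 1) = h ^ α / α := by
    rw [integral_rpow (Or.inl hα1)]
    rw [Real.zero_rpow (by linarith : α - 1 + 1 ≠ 0)]
    ring_nf
  have key : ∀ (k : ℕ), 0 < α + k → (∀ u ∈ Set.uIcc (0:ℝ) h, u ^ (α - 1) * u ^ k = u ^ (α + k - 1)) := by
    intro k hk u hu
    rw [Set.uIcc_of_le hh] at hu
    rcases eq_or_lt_of_le hu.1 with h0 | h0
    · rw [← h0]
      rcases Nat.eq_zero_or_pos k with rfl | hkpos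
      · simp [Real.rpow_natCast]
      · have hk1 : (1:ℝ) ≤ (k:ℝ) := by exact_mod_cast hkpos
        rw [zero_pow hkpos.ne', mul_zero, Real.zero_rpow (by linarith)]
    · rw [← Real.rpow_natCast u k, ← Real.rpow_add h0]
      ring_nf
  have e1 : ∫ u in (0:ℝ)..h, u ^ (α - 1) * u = h ^ (α + 1) / (α + 1) := by
    rw [intervalIntegral.integral_congr (g := fun u => u ^ (α + 1 - 1))
      (fun u hu => by simpa using key 1 (by linarith) u hu)]
    rw [integral_rpow (Or.inl (by linarith))]
    rw [Real.zero_rpow (by linarith : α + 1 - 1 + 1 ≠ 0)]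
    ring_nf
  have e2 : ∫ u in (0:ℝ)..h, u ^ (α - 1) * u ^ 2 = h ^ (α + 2) / (α + 2) := by
    rw [intervalIntegral.integral_congr (g := fun u => u ^ (α + 2 - 1))
      (fun u hu => by simpa using key 2 (by linarith) u hu)]
    rw [integral_rpow (Or.inl (by linarith))]
    rw [Real.zero_rpow (by linarith : α + 2 - 1 + 1 ≠ 0)]
    ring_nf
  have split : ∫ u in (0:ℝ)..h, u ^ (α - 1) * (c₀ + c₁ * u + c₂ * u ^ 2) =
      ∫ u in (0:ℝ)..h, (c₀ * u ^ (α - 1) + c₁ * (u ^ (α - 1) * u) + c₂ * (u ^ (α - 1) * u ^ 2)) :=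
    intervalIntegral.integral_congr (fun u _ => by ring)
  rw [split, intervalIntegral.integral_add (((i0.const_mul c₀).add (i1.const_mul c₁)))
      (i2.const_mul c₂),
    intervalIntegral.integral_add (i0.const_mul c₀) (i1.const_mul c₁),
    intervalIntegral.integral_const_mul, intervalIntegral.integral_const_mul,
    intervalIntegral.integral_const_mul, e0, e1, e2]
  ring

set_option maxHeartbeats 2000000 in
theorem fejer_fractional_bound
    (f f' g : ℝ → ℝ) (a b α : ℝ) (hab : a < b) (hα : 0 < α)
    (hf : ∀ x ∈ Set.Ioo a b, HasDerivAt f (f' x) x)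
    (hf' : IntervalIntegrable f' MeasureTheory.volume a b)
    (hconv : ConvexOn ℝ (Set.Icc a b) (fun x => |f' x|))
    (hg : ContinuousOn g (Set.Icc a b)) :
    |f ((a + b) / 2) *
        ((1 / Real.Gamma α) * (∫ t in a..(a + b) / 2, (t - a) ^ (α - 1) * g t) +
          (1 / Real.Gamma α) * ∫ t in ((a + b) / 2)..b, (b - t) ^ (α - 1) * g t) -
      ((1 / Real.Gamma α) * (∫ t in a..(a + b) / 2, (t - a) ^ (α - 1) * (g t * f t)) +
        (1 / Real.Gamma α) * ∫ t in ((a + b) / 2)..b, (b - t) ^ (α - 1) * (g t * f t))| ≤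
    (sSup ((fun x => |g x|) '' Set.Icc a ((a + b) / 2)) / ((b - a) * Real.Gamma (α + 1))) *
      (|f' a| * (((b - a) / 2) ^ (α + 1) * (b - a) / (α + 1) -
          ((b - a) / 2) ^ (α + 2) / (α + 2)) +
        |f' b| * (((b - a) / 2) ^ (α + 2) / (α + 2))) +
    (sSup ((fun x => |g x|) '' Set.Icc ((a + b) / 2) b) / ((b - a) * Real.Gamma (α + 1))) *
      (|f' b| * (((b - a) / 2) ^ (α + 1) * (b - a) / (α + 1) -
          ((b - a) / 2) ^ (α + 2) / (α + 2)) +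
        |f' a| * (((b - a) / 2) ^ (α + 2) / (α + 2))) := by
  have hL : (0:ℝ) < b - a := by linarith
  set m : ℝ := (a + b) / 2 with hm
  have ham : a < m := by rw [hm]; linarith
  have hmb : m < b := by rw [hm]; linarith
  set hh : ℝ := (b - a) / 2 with hhh
  have hhpos : (0:ℝ) < hh := by rw [hhh]; linarith
  have hma : m - a = hh := by rw [hm, hhh]; ring
  have hbm : b - m = hh := by rw [hm, hhh]; ring
  have Γpos : 0 < Real.Gamma α := Real.Gamma_pos_of_pos hα
  set A := |f' a| with hA'
  set B := |f' b| with hB'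
  have hA : 0 ≤ A := abs_nonneg _
  have hB : 0 ≤ B := abs_nonneg _
  -- sup bounds
  set M₁ := sSup ((fun x => |g x|) '' Set.Icc a m) with hM₁'
  set M₂ := sSup ((fun x => |g x|) '' Set.Icc m b) with hM₂'
  have habs : ContinuousOn (fun x => |g x|) (Set.Icc a b) := hg.abs
  have bdd₁ : BddAbove ((fun x => |g x|) '' Set.Icc a m) :=
    (isCompact_Icc.image_of_continuousOn (habs.mono (Set.Icc_subset_Icc le_rfl hmb.le))).bddAbove
  have bdd₂ : BddAbove ((fun x => |g x|) '' Set.Icc m b) :=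
    (isCompact_Icc.image_of_continuousOn (habs.mono (Set.Icc_subset_Icc ham.le le_rfl))).bddAbove
  have hM₁le : ∀ t ∈ Set.Icc a m, |g t| ≤ M₁ := fun t ht => le_csSup bdd₁ ⟨t, ht, rfl⟩
  have hM₂le : ∀ t ∈ Set.Icc m b, |g t| ≤ M₂ := fun t ht => le_csSup bdd₂ ⟨t, ht, rfl⟩
  have hM₁0 : 0 ≤ M₁ := le_trans (abs_nonneg (g a)) (hM₁le a ⟨le_rfl, ham.le⟩)
  have hM₂0 : 0 ≤ M₂ := le_trans (abs_nonneg (g b)) (hM₂le b ⟨hmb.le, le_rfl⟩)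
  -- continuity / measurability of f
  have contf : ContinuousOn f (Set.Ioo a b) :=
    fun x hx => ((hf x hx).continuousAt).continuousWithinAt
  have msf : AEStronglyMeasurable f (volume.restrict (Set.Ioo a b)) :=
    contf.aestronglyMeasurable measurableSet_Ioo
  have hsub₁ : Set.Ioc a m ⊆ Set.Ioo a b := fun x hx => ⟨hx.1, lt_of_le_of_lt hx.2 hmb⟩
  have hsub₂ : Set.Ioo m b ⊆ Set.Ioo a b := fun x hx => ⟨lt_trans ham hx.1, hx.2⟩
  have msf₁ : AEStronglyMeasurable f (volume.restrict (Set.Ioc a m)) :=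
    msf.mono_measure (Measure.restrict_mono hsub₁ le_rfl)
  have msf₂ : AEStronglyMeasurable f (volume.restrict (Set.Ioc m b)) := by
    rw [← MeasureTheory.restrict_Ioo_eq_restrict_Ioc]
    exact msf.mono_measure (Measure.restrict_mono hsub₂ le_rfl)
  -- FTC
  have ftc : ∀ t ∈ Set.Ioo a b, f m - f t = ∫ s in t..m, f' s := by
    intro t ht
    have hmem : Set.uIcc t m ⊆ Set.Ioo a b :=
      Set.OrdConnected.uIcc_subset Set.ordConnected_Ioo ht ⟨ham, hmb⟩
    have hsub : Set.uIcc t m ⊆ Set.uIcc a b := by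
      rw [Set.uIcc_of_le hab.le]
      exact hmem.trans Set.Ioo_subset_Icc_self
    exact (intervalIntegral.integral_eq_sub_of_hasDerivAt
      (fun x hx => hf x (hmem hx)) (hf'.mono_set hsub)).symm
  -- chord line
  set cL := (A * b - B * a) / (b - a) with hcL
  set dL := (B - A) / (b - a) with hdL
  have ell_bound : ∀ s ∈ Set.Icc a b, |f' s| ≤ cL + dL * s := by
    intro s hs
    calc |f' s| ≤ ((b - s) * A + (s - a) * B) / (b - a) := chord_bound hab hconv s hs
      _ = cL + dL * s := by rw [hcL, hdL]; field_simp; ring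
  have ell_cont : Continuous (fun s : ℝ => cL + dL * s) :=
    continuous_const.add (continuous_const.mul continuous_id)
  have ell_int : ∀ t₁ t₂ : ℝ, (∫ s in t₁..t₂, (cL + dL * s)) =
      cL * (t₂ - t₁) + dL * (t₂ ^ 2 - t₁ ^ 2) / 2 := by
    intro t₁ t₂
    have h2 : IntervalIntegrable (fun s : ℝ => dL * s) volume t₁ t₂ :=
      (by fun_prop : Continuous fun s : ℝ => dL * s).intervalIntegrable _ _
    rw [intervalIntegral.integral_add intervalIntegrable_const h2,
      intervalIntegral.integral_const, intervalIntegral.integral_const_mul, integral_id]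
    simp only [smul_eq_mul]
    ring
  have intabs : ∀ t₁ t₂, a ≤ t₁ → t₁ ≤ t₂ → t₂ ≤ b →
      (∫ s in t₁..t₂, |f' s|) ≤ cL * (t₂ - t₁) + dL * (t₂ ^ 2 - t₁ ^ 2) / 2 := by
    intro t₁ t₂ h1 h2 h3
    rw [← ell_int]
    have hsub : Set.uIcc t₁ t₂ ⊆ Set.uIcc a b := by
      rw [Set.uIcc_of_le hab.le, Set.uIcc_of_le h2]
      exact Set.Icc_subset_Icc h1 h3
    exact intervalIntegral.integral_mono_on h2 (hf'.abs.mono_set hsub)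
      (ell_cont.intervalIntegrable _ _)
      (fun x hx => ell_bound x ⟨le_trans h1 hx.1, le_trans hx.2 h3⟩)
  have fb1 : ∀ t, a < t → t ≤ m → |f m - f t| ≤ cL * (m - t) + dL * (m ^ 2 - t ^ 2) / 2 := by
    intro t h1 h2
    rw [ftc t ⟨h1, lt_of_le_of_lt h2 hmb⟩]
    calc |(∫ s in t..m, f' s)| ≤ ∫ s in t..m, |f' s| :=
          intervalIntegral.abs_integral_le_integral_abs h2
      _ ≤ _ := intabs t m h1.le h2 hmb.le
  have fb2 : ∀ t, m ≤ t → t < b → |f m - f t| ≤ cL * (t - m) + dL * (t ^ 2 - m ^ 2) / 2 := by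
    intro t h1 h2
    rw [ftc t ⟨lt_of_lt_of_le ham h1, h2⟩, intervalIntegral.integral_symm, abs_neg]
    calc |(∫ s in m..t, f' s)| ≤ ∫ s in m..t, |f' s| :=
          intervalIntegral.abs_integral_le_integral_abs h1
      _ ≤ _ := intabs m t ham.le h1 h2.le
  -- global bound for f
  set G := ∫ s in a..b, |f' s| with hG
  have Gnn : 0 ≤ G := intervalIntegral.integral_nonneg hab.le (fun x _ => abs_nonneg _)
  set Cf := |f m| + G with hCf
  have fbd : ∀ t ∈ Set.Ioo a b, |f t| ≤ Cf := by
    intro t ht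
    have h1 : |f t| ≤ |f m| + |f m - f t| := by
      calc |f t| = |f m - (f m - f t)| := by rw [sub_sub_cancel]
        _ ≤ |f m| + |f m - f t| := abs_sub _ _
    have h2 : |f m - f t| ≤ G := by
      rw [ftc t ht]
      calc |(∫ s in t..m, f' s)| ≤ |(∫ s in t..m, |f' s|)| := by
            simpa [Real.norm_eq_abs] using
              intervalIntegral.norm_integral_le_abs_integral_norm (f := f') (a := t) (b := m)
        _ ≤ |(∫ s in a..b, |f' s|)| := by
            apply intervalIntegral.abs_integral_mono_interval
            · rw [Set.uIoc_of_le hab.le]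
              exact Set.Ioc_subset_Ioc (le_min ht.1.le ham.le)
                (max_le ht.2.le hmb.le)
            · exact Filter.Eventually.of_forall (fun x => abs_nonneg _)
            · exact hf'.abs
        _ = G := abs_of_nonneg Gnn
    linarith
  -- integrability
  have hα1 : (-1:ℝ) < α - 1 := by linarith
  have w1int : IntervalIntegrable (fun t => (t - a) ^ (α - 1)) volume a m := by
    have := (intervalIntegral.intervalIntegrable_rpow' (a := 0) (b := m - a) hα1).comp_sub_right a
    simpa using this
  have w2int : IntervalIntegrable (fun t => (b - t) ^ (α - 1)) volume m b := by
    have := ((intervalIntegral.intervalIntegrable_rpow' (a := 0) (b := b - m) hα1).comp_sub_left b).symm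
    simpa using this
  have gcont1 : ContinuousOn g (Set.uIcc a m) := by
    rw [Set.uIcc_of_le ham.le]; exact hg.mono (Set.Icc_subset_Icc le_rfl hmb.le)
  have gcont2 : ContinuousOn g (Set.uIcc m b) := by
    rw [Set.uIcc_of_le hmb.le]; exact hg.mono (Set.Icc_subset_Icc ham.le le_rfl)
  have int1g : IntervalIntegrable (fun t => (t - a) ^ (α - 1) * g t) volume a m :=
    w1int.mul_continuousOn gcont1
  have int2g : IntervalIntegrable (fun t => (b - t) ^ (α - 1) * g t) volume m b :=
    w2int.mul_continuousOn gcont2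
  have int1gf : IntervalIntegrable (fun t => (t - a) ^ (α - 1) * (g t * f t)) volume a m := by
    apply (w1int.mul_const (M₁ * Cf)).mono_fun
    · rw [Set.uIoc_of_le ham.le]
      exact ((int1g.1.aestronglyMeasurable).mul msf₁).congr
        (Filter.Eventually.of_forall (fun x => mul_assoc _ _ _))
    · rw [Set.uIoc_of_le ham.le]
      refine (MeasureTheory.ae_restrict_iff' measurableSet_Ioc).2
        (Filter.Eventually.of_forall (fun t ht => ?_))
      have hw : (0:ℝ) ≤ (t - a) ^ (α - 1) := Real.rpow_nonneg (by linarith [ht.1]) _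
      have hgt : |g t| ≤ M₁ := hM₁le t ⟨ht.1.le, ht.2⟩
      have hft : |f t| ≤ Cf := fbd t ⟨ht.1, lt_of_le_of_lt ht.2 hmb⟩
      have hCf0 : 0 ≤ Cf := le_trans (abs_nonneg _) hft
      simp only [Real.norm_eq_abs, abs_mul, abs_of_nonneg hw]
      rw [abs_of_nonneg hM₁0, abs_of_nonneg hCf0]
      gcongr
  have int2gf : IntervalIntegrable (fun t => (b - t) ^ (α - 1) * (g t * f t)) volume m b := by
    apply (w2int.mul_const (M₂ * Cf)).mono_fun
    · rw [Set.uIoc_of_le hmb.le]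
      exact ((int2g.1.aestronglyMeasurable).mul msf₂).congr
        (Filter.Eventually.of_forall (fun x => mul_assoc _ _ _))
    · rw [Set.uIoc_of_le hmb.le, ← MeasureTheory.restrict_Ioo_eq_restrict_Ioc]
      refine (MeasureTheory.ae_restrict_iff' measurableSet_Ioo).2
        (Filter.Eventually.of_forall (fun t ht => ?_))
      have hw : (0:ℝ) ≤ (b - t) ^ (α - 1) := Real.rpow_nonneg (by linarith [ht.2]) _
      have hgt : |g t| ≤ M₂ := hM₂le t ⟨ht.1.le, ht.2.le⟩
      have hft : |f t| ≤ Cf := fbd t ⟨lt_trans ham ht.1, ht.2⟩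
      have hCf0 : 0 ≤ Cf := le_trans (abs_nonneg _) hft
      simp only [Real.norm_eq_abs, abs_mul, abs_of_nonneg hw]
      rw [abs_of_nonneg hM₂0, abs_of_nonneg hCf0]
      gcongr
  -- difference identities
  have key1 : f m * (∫ t in a..m, (t - a) ^ (α - 1) * g t) -
      (∫ t in a..m, (t - a) ^ (α - 1) * (g t * f t)) =
      ∫ t in a..m, (t - a) ^ (α - 1) * g t * (f m - f t) := by
    rw [← intervalIntegral.integral_const_mul,
      ← intervalIntegral.integral_sub (int1g.const_mul (f m)) int1gf]
    exact intervalIntegral.integral_congr (fun t _ => by ring)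
  have key2 : f m * (∫ t in m..b, (b - t) ^ (α - 1) * g t) -
      (∫ t in m..b, (b - t) ^ (α - 1) * (g t * f t)) =
      ∫ t in m..b, (b - t) ^ (α - 1) * g t * (f m - f t) := by
    rw [← intervalIntegral.integral_const_mul,
      ← intervalIntegral.integral_sub (int2g.const_mul (f m)) int2gf]
    exact intervalIntegral.integral_congr (fun t _ => by ring)
  -- majorants
  set φ₁ : ℝ → ℝ := fun u => M₁ * ((A * ((b - a - u) ^ 2 - hh ^ 2) + B * (hh ^ 2 - u ^ 2)) / (2 * (b - a))) with hφ₁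
  set φ₂ : ℝ → ℝ := fun u => M₂ * ((B * ((b - a - u) ^ 2 - hh ^ 2) + A * (hh ^ 2 - u ^ 2)) / (2 * (b - a))) with hφ₂
  have φ₁cont : Continuous φ₁ := by rw [hφ₁]; fun_prop
  have φ₂cont : Continuous φ₂ := by rw [hφ₂]; fun_prop
  have maj1int : IntervalIntegrable (fun t => (t - a) ^ (α - 1) * φ₁ (t - a)) volume a m := by
    have : IntervalIntegrable (fun u : ℝ => u ^ (α - 1) * φ₁ u) volume 0 (m - a) :=
      (intervalIntegral.intervalIntegrable_rpow' hα1).mul_continuousOn φ₁cont.continuousOn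
    have := this.comp_sub_right a
    simpa using this
  have maj2int : IntervalIntegrable (fun t => (b - t) ^ (α - 1) * φ₂ (b - t)) volume m b := by
    have : IntervalIntegrable (fun u : ℝ => u ^ (α - 1) * φ₂ u) volume 0 (b - m) :=
      (intervalIntegral.intervalIntegrable_rpow' hα1).mul_continuousOn φ₂cont.continuousOn
    have := (this.comp_sub_left b).symm
    simpa using this
  -- nonnegativity of majorants
  have φ₁nn : ∀ u : ℝ, 0 ≤ u → u ≤ hh → 0 ≤ φ₁ u := by
    intro u hu0 hu1
    rw [hφ₁]
    have hL2 : hh + hh = b - a := by rw [hhh]; ring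
    have h1 : hh ≤ b - a - u := by linarith
    have h2 : hh ^ 2 ≤ (b - a - u) ^ 2 := pow_le_pow_left₀ hhpos.le h1 2
    have h3 : u ^ 2 ≤ hh ^ 2 := pow_le_pow_left₀ hu0 hu1 2
    exact mul_nonneg hM₁0 (div_nonneg
      (add_nonneg (mul_nonneg hA (sub_nonneg.2 h2)) (mul_nonneg hB (sub_nonneg.2 h3)))
      (by linarith : (0:ℝ) ≤ 2 * (b - a)))
  have φ₂nn : ∀ u : ℝ, 0 ≤ u → u ≤ hh → 0 ≤ φ₂ u := by
    intro u hu0 hu1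
    rw [hφ₂]
    have hL2 : hh + hh = b - a := by rw [hhh]; ring
    have h1 : hh ≤ b - a - u := by linarith
    have h2 : hh ^ 2 ≤ (b - a - u) ^ 2 := pow_le_pow_left₀ hhpos.le h1 2
    have h3 : u ^ 2 ≤ hh ^ 2 := pow_le_pow_left₀ hu0 hu1 2
    exact mul_nonneg hM₂0 (div_nonneg
      (add_nonneg (mul_nonneg hB (sub_nonneg.2 h2)) (mul_nonneg hA (sub_nonneg.2 h3)))
      (by linarith : (0:ℝ) ≤ 2 * (b - a)))
  have maj1nn : 0 ≤ ∫ t in a..m, (t - a) ^ (α - 1) * φ₁ (t - a) := by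
    apply intervalIntegral.integral_nonneg ham.le
    intro u hu
    exact mul_nonneg (Real.rpow_nonneg (by linarith [hu.1]) _)
      (φ₁nn _ (by linarith [hu.1]) (by linarith [hu.2, hma]))
  have maj2nn : 0 ≤ ∫ t in m..b, (b - t) ^ (α - 1) * φ₂ (b - t) := by
    apply intervalIntegral.integral_nonneg hmb.le
    intro u hu
    exact mul_nonneg (Real.rpow_nonneg (by linarith [hu.2]) _)
      (φ₂nn _ (by linarith [hu.2]) (by linarith [hu.1, hbm]))
  -- pointwise bounds
  have bound1 : |∫ t in a..m, (t - a) ^ (α - 1) * g t * (f m - f t)| ≤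
      ∫ t in a..m, (t - a) ^ (α - 1) * φ₁ (t - a) := by
    have := intervalIntegral.norm_integral_le_abs_of_norm_le (μ := volume)
      (f := fun t => (t - a) ^ (α - 1) * g t * (f m - f t))
      (g := fun t => (t - a) ^ (α - 1) * φ₁ (t - a)) (a := a) (b := m) ?_ maj1int
    · rw [Real.norm_eq_abs, abs_of_nonneg maj1nn] at this
      exact this
    · rw [Set.uIoc_of_le ham.le]
      refine (MeasureTheory.ae_restrict_iff' measurableSet_Ioc).2
        (Filter.Eventually.of_forall (fun t ht => ?_))
      have hw : (0:ℝ) ≤ (t - a) ^ (α - 1) := Real.rpow_nonneg (by linarith [ht.1]) _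
      have hgt : |g t| ≤ M₁ := hM₁le t ⟨ht.1.le, ht.2⟩
      have hFt : |f m - f t| ≤ cL * (m - t) + dL * (m ^ 2 - t ^ 2) / 2 := fb1 t ht.1 ht.2
      have hΦ : M₁ * (cL * (m - t) + dL * (m ^ 2 - t ^ 2) / 2) ≤ φ₁ (t - a) := by
        rw [hφ₁]
        have : cL * (m - t) + dL * (m ^ 2 - t ^ 2) / 2 =
            (A * ((b - a - (t - a)) ^ 2 - hh ^ 2) + B * (hh ^ 2 - (t - a) ^ 2)) / (2 * (b - a)) := by
          rw [hcL, hdL, hm, hhh]; field_simp; ring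
        rw [this]
      have habs1 : |g t| * |f m - f t| ≤ M₁ * (cL * (m - t) + dL * (m ^ 2 - t ^ 2) / 2) :=
        mul_le_mul hgt hFt (abs_nonneg _) hM₁0
      calc ‖(t - a) ^ (α - 1) * g t * (f m - f t)‖
          = (t - a) ^ (α - 1) * (|g t| * |f m - f t|) := by
            simp [Real.norm_eq_abs, abs_mul, abs_of_nonneg hw, mul_assoc]
        _ ≤ (t - a) ^ (α - 1) * φ₁ (t - a) := by
            apply mul_le_mul_of_nonneg_left (le_trans habs1 hΦ) hw
  have bound2 : |∫ t in m..b, (b - t) ^ (α - 1) * g t * (f m - f t)| ≤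
      ∫ t in m..b, (b - t) ^ (α - 1) * φ₂ (b - t) := by
    have := intervalIntegral.norm_integral_le_abs_of_norm_le (μ := volume)
      (f := fun t => (b - t) ^ (α - 1) * g t * (f m - f t))
      (g := fun t => (b - t) ^ (α - 1) * φ₂ (b - t)) (a := m) (b := b) ?_ maj2int
    · rw [Real.norm_eq_abs, abs_of_nonneg maj2nn] at this
      exact this
    · rw [Set.uIoc_of_le hmb.le, ← MeasureTheory.restrict_Ioo_eq_restrict_Ioc]
      refine (MeasureTheory.ae_restrict_iff' measurableSet_Ioo).2
        (Filter.Eventually.of_forall (fun t ht => ?_))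
      have hw : (0:ℝ) ≤ (b - t) ^ (α - 1) := Real.rpow_nonneg (by linarith [ht.2]) _
      have hgt : |g t| ≤ M₂ := hM₂le t ⟨ht.1.le, ht.2.le⟩
      have hFt : |f m - f t| ≤ cL * (t - m) + dL * (t ^ 2 - m ^ 2) / 2 := fb2 t ht.1.le ht.2
      have hΦ : M₂ * (cL * (t - m) + dL * (t ^ 2 - m ^ 2) / 2) ≤ φ₂ (b - t) := by
        rw [hφ₂]
        have : cL * (t - m) + dL * (t ^ 2 - m ^ 2) / 2 =
            (B * ((b - a - (b - t)) ^ 2 - hh ^ 2) + A * (hh ^ 2 - (b - t) ^ 2)) / (2 * (b - a)) := by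
          rw [hcL, hdL, hm, hhh]; field_simp; ring
        rw [this]
      have habs1 : |g t| * |f m - f t| ≤ M₂ * (cL * (t - m) + dL * (t ^ 2 - m ^ 2) / 2) :=
        mul_le_mul hgt hFt (abs_nonneg _) hM₂0
      calc ‖(b - t) ^ (α - 1) * g t * (f m - f t)‖
          = (b - t) ^ (α - 1) * (|g t| * |f m - f t|) := by
            simp [Real.norm_eq_abs, abs_mul, abs_of_nonneg hw, mul_assoc]
        _ ≤ (b - t) ^ (α - 1) * φ₂ (b - t) := by
            apply mul_le_mul_of_nonneg_left (le_trans habs1 hΦ) hw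
  -- compute the majorant integrals
  set c₀ := M₁ * (A * ((b - a) ^ 2 - hh ^ 2) + B * hh ^ 2) / (2 * (b - a)) with hc₀
  set c₁ := -(M₁ * A) with hc₁
  set c₂ := M₁ * (A - B) / (2 * (b - a)) with hc₂
  set d₀ := M₂ * (B * ((b - a) ^ 2 - hh ^ 2) + A * hh ^ 2) / (2 * (b - a)) with hd₀
  set d₁ := -(M₂ * B) with hd₁
  set d₂ := M₂ * (B - A) / (2 * (b - a)) with hd₂
  have comp1 : (∫ t in a..m, (t - a) ^ (α - 1) * φ₁ (t - a)) =
      c₀ * hh ^ α / α + c₁ * hh ^ (α + 1) / (α + 1) + c₂ * hh ^ (α + 2) / (α + 2) := by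
    have subst1 : (∫ t in a..m, (t - a) ^ (α - 1) * φ₁ (t - a)) =
        ∫ u in (0:ℝ)..(m - a), u ^ (α - 1) * φ₁ u := by
      have := intervalIntegral.integral_comp_sub_right (a := a) (b := m)
        (fun u => u ^ (α - 1) * φ₁ u) a
      simpa using this
    have hpoly1 : ∀ u : ℝ, φ₁ u = c₀ + c₁ * u + c₂ * u ^ 2 := by
      intro u
      simp only [hφ₁, hc₀, hc₁, hc₂]
      field_simp
      ring
    rw [subst1, hma]
    rw [intervalIntegral.integral_congr (g := fun u => u ^ (α - 1) * (c₀ + c₁ * u + c₂ * u ^ 2))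
      (fun u _ => by rw [hpoly1])]
    exact rpow_poly_int hα hhpos.le c₀ c₁ c₂
  have comp2 : (∫ t in m..b, (b - t) ^ (α - 1) * φ₂ (b - t)) =
      d₀ * hh ^ α / α + d₁ * hh ^ (α + 1) / (α + 1) + d₂ * hh ^ (α + 2) / (α + 2) := by
    have subst2 : (∫ t in m..b, (b - t) ^ (α - 1) * φ₂ (b - t)) =
        ∫ u in (0:ℝ)..(b - m), u ^ (α - 1) * φ₂ u := by
      have := intervalIntegral.integral_comp_sub_left (a := m) (b := b)
        (fun u => u ^ (α - 1) * φ₂ u) b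
      simpa using this
    have hpoly2 : ∀ u : ℝ, φ₂ u = d₀ + d₁ * u + d₂ * u ^ 2 := by
      intro u
      simp only [hφ₂, hd₀, hd₁, hd₂]
      field_simp
      ring
    rw [subst2, hbm]
    rw [intervalIntegral.integral_congr (g := fun u => u ^ (α - 1) * (d₀ + d₁ * u + d₂ * u ^ 2))
      (fun u _ => by rw [hpoly2])]
    exact rpow_poly_int hα hhpos.le d₀ d₁ d₂
  -- assemble
  have ΓA : Real.Gamma (α + 1) = α * Real.Gamma α := Real.Gamma_add_one hα.ne'
  have e1 : hh ^ (α + 1) = hh ^ α * hh := by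
    rw [Real.rpow_add hhpos, Real.rpow_one]
  have e2 : hh ^ (α + 2) = hh ^ α * hh ^ 2 := by
    rw [Real.rpow_add hhpos, show (2:ℝ) = ((2:ℕ):ℝ) by norm_num, Real.rpow_natCast]
  have Γnn : (0:ℝ) ≤ 1 / Real.Gamma α := by positivity
  have hba2 : b - a = 2 * hh := by rw [hhh]; ring
  rw [show f m * ((1 / Real.Gamma α) * (∫ t in a..m, (t - a) ^ (α - 1) * g t) +
        (1 / Real.Gamma α) * ∫ t in m..b, (b - t) ^ (α - 1) * g t) -
      ((1 / Real.Gamma α) * (∫ t in a..m, (t - a) ^ (α - 1) * (g t * f t)) +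
        (1 / Real.Gamma α) * ∫ t in m..b, (b - t) ^ (α - 1) * (g t * f t)) =
      (1 / Real.Gamma α) * (f m * (∫ t in a..m, (t - a) ^ (α - 1) * g t) -
        (∫ t in a..m, (t - a) ^ (α - 1) * (g t * f t))) +
      (1 / Real.Gamma α) * (f m * (∫ t in m..b, (b - t) ^ (α - 1) * g t) -
        (∫ t in m..b, (b - t) ^ (α - 1) * (g t * f t))) from by ring, key1, key2]
  calc |(1 / Real.Gamma α) * (∫ t in a..m, (t - a) ^ (α - 1) * g t * (f m - f t)) +
        (1 / Real.Gamma α) * (∫ t in m..b, (b - t) ^ (α - 1) * g t * (f m - f t))|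
      ≤ |(1 / Real.Gamma α) * (∫ t in a..m, (t - a) ^ (α - 1) * g t * (f m - f t))| +
        |(1 / Real.Gamma α) * (∫ t in m..b, (b - t) ^ (α - 1) * g t * (f m - f t))| :=
        abs_add_le _ _
    _ = (1 / Real.Gamma α) * |(∫ t in a..m, (t - a) ^ (α - 1) * g t * (f m - f t))| +
        (1 / Real.Gamma α) * |(∫ t in m..b, (b - t) ^ (α - 1) * g t * (f m - f t))| := by
        rw [abs_mul, abs_mul, abs_of_nonneg Γnn]
    _ ≤ (1 / Real.Gamma α) * (∫ t in a..m, (t - a) ^ (α - 1) * φ₁ (t - a)) +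
        (1 / Real.Gamma α) * (∫ t in m..b, (b - t) ^ (α - 1) * φ₂ (b - t)) :=
        add_le_add (mul_le_mul_of_nonneg_left bound1 Γnn)
          (mul_le_mul_of_nonneg_left bound2 Γnn)
    _ = M₁ / ((b - a) * Real.Gamma (α + 1)) *
          (A * (hh ^ (α + 1) * (b - a) / (α + 1) - hh ^ (α + 2) / (α + 2)) +
            B * (hh ^ (α + 2) / (α + 2))) +
        M₂ / ((b - a) * Real.Gamma (α + 1)) *
          (B * (hh ^ (α + 1) * (b - a) / (α + 1) - hh ^ (α + 2) / (α + 2)) +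
            A * (hh ^ (α + 2) / (α + 2))) := by
        rw [comp1, comp2, ΓA, e1, e2]
        simp only [hc₀, hc₁, hc₂, hd₀, hd₁, hd₂]
        rw [hba2]
        have hΓ : Real.Gamma α ≠ 0 := Γpos.ne'
        have h1 : α + 1 ≠ 0 := by positivity
        have h2 : α + 2 ≠ 0 := by positivity
        have h3 : hh ≠ 0 := hhpos.ne'
        field_simp
        ring
end

section
/- Let f be differentiable on (a,b) with |f'| convex on [a,b], g : [a,b] → ℝ continuous, α > 0. Then f((a+b)/2)[ −J_{a+}^α g(b) − J_{b-}^α g(a) + J_{((a+b)/2)+}^α g(b) + J_{((a+b)/2)-}^α g(a) + ((b-a)^{α-1}/Γ(α)) ∫_a^b g(s) ds ] + J_{a+}^α (gf)(b) + J_{b-}^α (gf)(a) − J_{((a+b)/2)+}^α (gf)(b) − J_{((a+b)/2)-}^α (gf)(a) − ((b-a)^{α-1}/Γ(α)) ∫_a^b g(t) f(t) dt ≤ (‖g‖_{∞,[a,(a+b)/2]}/((b-a)Γ(α))) ∫_a^{(a+b)/2} [ ∫_a^t ((b-a)^{α-1} − (b-s)^{α-1} + (s-a)^{α-1}) ds ]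 ((b-t)|f'(a)| + (t-a)|f'(b)|) dt + (‖g‖_{∞,[(a+b)/2,b]}/((b-a)Γ(α))) ∫_{(a+b)/2}^b [ ∫_t^b ((b-s)^{α-1} − (s-a)^{α-1} + (b-a)^{α-1}) ds ] ((b-t)|f'(a)| + (t-a)|f'(b)|) dt. -/
open MeasureTheory intervalIntegral Set

private theorem tri_swap_cont (c d : ℝ) (p q : ℝ → ℝ) (hp : Continuous p) (hq : Continuous q) :
    ∫ t in c..d, p t * ∫ u in t..d, q u = ∫ u in c..d, (∫ t in c..u, p t) * q u := by
  have hP : ∀ x : ℝ, HasDerivAt (fun y => ∫ t in c..y, p t) (p x) x := fun x =>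
    intervalIntegral.integral_hasDerivAt_right (hp.intervalIntegrable c x)
      (hp.stronglyMeasurableAtFilter _ _) hp.continuousAt
  have hV : ∀ x : ℝ, HasDerivAt (fun y => ∫ t in c..y, q t) (q x) x := fun x =>
    intervalIntegral.integral_hasDerivAt_right (hq.intervalIntegrable c x)
      (hq.stronglyMeasurableAtFilter _ _) hq.continuousAt
  have hPc : Continuous fun y => ∫ t in c..y, p t :=
    intervalIntegral.continuous_primitive (fun a b => hp.intervalIntegrable a b) c
  have hVc : Continuous fun y => ∫ t in c..y, q t :=
    intervalIntegral.continuous_primitive (fun a b => hq.intervalIntegrable a b) c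
  have parts := intervalIntegral.integral_mul_deriv_eq_deriv_mul
    (u := fun y => ∫ t in c..y, p t) (v := fun y => ∫ t in c..y, q t) (u' := p) (v' := q)
    (fun x _ => hP x) (fun x _ => hV x) (hp.intervalIntegrable c d) (hq.intervalIntegrable c d)
  simp only [intervalIntegral.integral_same, mul_zero, sub_zero] at parts
  have hsplit : ∀ t : ℝ, (∫ u in t..d, q u) = (∫ u in c..d, q u) - ∫ u in c..t, q u :=
    fun t => (intervalIntegral.integral_interval_sub_left
      (hq.intervalIntegrable c d) (hq.intervalIntegrable c t)).symm
  calc ∫ t in c..d, p t * ∫ u in t..d, q u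
      = ∫ t in c..d, (p t * (∫ u in c..d, q u) - p t * ∫ u in c..t, q u) := by
        apply intervalIntegral.integral_congr; intro t _
        show p t * ∫ u in t..d, q u = _
        rw [hsplit t]; ring
    _ = (∫ t in c..d, p t * (∫ u in c..d, q u)) - ∫ t in c..d, p t * ∫ u in c..t, q u :=
        intervalIntegral.integral_sub ((hp.intervalIntegrable c d).mul_const _)
          ((hp.mul hVc).intervalIntegrable c d)
    _ = ∫ u in c..d, (∫ t in c..u, p t) * q u := by
        rw [intervalIntegral.integral_mul_const, parts]

private theorem tri_swap (c d : ℝ) (hcd : c ≤ d) (p q : ℝ → ℝ)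
    (hp : ContinuousOn p (Icc c d)) (hq : ContinuousOn q (Icc c d)) :
    ∫ t in c..d, p t * ∫ u in t..d, q u = ∫ u in c..d, (∫ t in c..u, p t) * q u := by
  set P : ℝ → ℝ := Set.IccExtend hcd ((Icc c d).restrict p) with hP
  set Q : ℝ → ℝ := Set.IccExtend hcd ((Icc c d).restrict q) with hQ
  have hPc : Continuous P := hp.restrict.Icc_extend'
  have hQc : Continuous Q := hq.restrict.Icc_extend'
  have hPeq : ∀ x ∈ Icc c d, P x = p x := fun x hx => Set.IccExtend_of_mem hcd _ hx
  have hQeq : ∀ x ∈ Icc c d, Q x = q x := fun x hx => Set.IccExtend_of_mem hcd _ hx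
  have key := tri_swap_cont c d P Q hPc hQc
  have h1 : ∀ x y, x ∈ Icc c d → y ∈ Icc c d →
      (∫ u in x..y, Q u) = ∫ u in x..y, q u := by
    intro x y hx hy
    apply intervalIntegral.integral_congr
    intro u hu
    exact hQeq u (Set.uIcc_subset_Icc hx hy hu)
  have h2 : ∀ x y, x ∈ Icc c d → y ∈ Icc c d →
      (∫ u in x..y, P u) = ∫ u in x..y, p u := by
    intro x y hx hy
    apply intervalIntegral.integral_congr
    intro u hu
    exact hPeq u (Set.uIcc_subset_Icc hx hy hu)
  have hcmem : c ∈ Icc c d := ⟨le_refl c, hcd⟩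
  have hdmem : d ∈ Icc c d := ⟨hcd, le_refl d⟩
  calc ∫ t in c..d, p t * ∫ u in t..d, q u
      = ∫ t in c..d, P t * ∫ u in t..d, Q u := by
        apply intervalIntegral.integral_congr
        intro t ht
        have htm : t ∈ Icc c d := by rwa [Set.uIcc_of_le hcd] at ht
        show p t * (∫ u in t..d, q u) = P t * ∫ u in t..d, Q u
        rw [hPeq t htm, h1 t d htm hdmem]
    _ = ∫ u in c..d, (∫ t in c..u, P t) * Q u := key
    _ = ∫ u in c..d, (∫ t in c..u, p t) * q u := by
        apply intervalIntegral.integral_congr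
        intro u hu
        have hum : u ∈ Icc c d := by rwa [Set.uIcc_of_le hcd] at hu
        show (∫ t in c..u, P t) * Q u = (∫ t in c..u, p t) * q u
        rw [hQeq u hum, h2 c u hcmem hum]

private theorem conv_bound (f' : ℝ → ℝ) (a b : ℝ) (hab : a < b)
    (hconv : ConvexOn ℝ (Set.Icc a b) (fun x => |f' x|)) :
    ∀ u ∈ Icc a b, |f' u| ≤ ((b - u) * |f' a| + (u - a) * |f' b|) / (b - a) := by
  intro u hu
  have hba : (0:ℝ) < b - a := by linarith
  have h1 : (0:ℝ) ≤ (b - u) / (b - a) := by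
    apply div_nonneg <;> linarith [hu.2]
  have h2 : (0:ℝ) ≤ (u - a) / (b - a) := by
    apply div_nonneg <;> linarith [hu.1]
  have h3 : (b - u) / (b - a) + (u - a) / (b - a) = 1 := by field_simp; ring
  have key := hconv.2 (left_mem_Icc.2 hab.le) (right_mem_Icc.2 hab.le) h1 h2 h3
  have h4 : ((b - u) / (b - a)) • a + ((u - a) / (b - a)) • b = u := by
    rw [smul_eq_mul, smul_eq_mul, div_mul_eq_mul_div, div_mul_eq_mul_div, ← add_div,
      div_eq_iff hba.ne']; ring
  rw [h4] at key
  simpa [smul_eq_mul, div_mul_eq_mul_div, add_div] using key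

private theorem ker1 (a b α : ℝ) (hab : a < b) (hα : 0 < α) :
    ∀ s ∈ Icc a ((a + b) / 2),
      |(b - s) ^ (α - 1) - (b - a) ^ (α - 1)| ≤
        (b - a) ^ (α - 1) - (b - s) ^ (α - 1) + (s - a) ^ (α - 1) := by
  intro s hs
  simp only [mem_Icc] at hs
  have hsa : 0 ≤ s - a := by linarith [hs.1]
  have hbs : 0 < b - s := by linarith [hs.2]
  have hba : (0:ℝ) < b - a := by linarith
  have hsb : b - s ≤ b - a := by linarith [hs.1]
  have hhalf : (b - a) / 2 ≤ b - s := by linarith [hs.2]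
  have hnn : (0:ℝ) ≤ (s - a) ^ (α - 1) := Real.rpow_nonneg hsa _
  rcases le_or_gt 1 α with h1 | h1
  · have : (b - s) ^ (α - 1) ≤ (b - a) ^ (α - 1) :=
      Real.rpow_le_rpow hbs.le hsb (by linarith)
    rw [abs_of_nonpos (by linarith)]
    linarith
  · have hle : (b - a) ^ (α - 1) ≤ (b - s) ^ (α - 1) :=
      Real.rpow_le_rpow_of_nonpos hbs hsb (by linarith)
    rw [abs_of_nonneg (by linarith)]
    rcases eq_or_lt_of_le hs.1 with he | hlt
    · rw [← he]
      simp only [sub_self]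
      rw [Real.zero_rpow (by intro h; rw [sub_eq_zero] at h; linarith)]
      linarith
    · have hs2 : (b - s) ^ (α - 1) ≤ (s - a) ^ (α - 1) := by
        apply Real.rpow_le_rpow_of_nonpos (by linarith) (by linarith [hs.2]) (by linarith)
      have hs3 : (b - s) ^ (α - 1) ≤ 2 * (b - a) ^ (α - 1) := by
        have e1 : (b - s) ^ (α - 1) ≤ ((b - a) / 2) ^ (α - 1) :=
          Real.rpow_le_rpow_of_nonpos (by linarith) hhalf (by linarith)
        have e2 : ((b - a) / 2) ^ (α - 1) = (b - a) ^ (α - 1) * (2:ℝ) ^ (1 - α) := by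
          rw [div_eq_mul_inv, Real.mul_rpow hba.le (by norm_num),
            Real.inv_rpow (by norm_num), ← Real.rpow_neg (by norm_num), neg_sub]
        have e3 : (2:ℝ) ^ (1 - α) ≤ 2 := by
          nth_rewrite 2 [← Real.rpow_one 2]
          exact Real.rpow_le_rpow_of_exponent_le one_le_two (by linarith)
        calc (b - s) ^ (α - 1) ≤ (b - a) ^ (α - 1) * (2:ℝ) ^ (1 - α) := by rw [← e2]; exact e1
          _ ≤ (b - a) ^ (α - 1) * 2 :=
            mul_le_mul_of_nonneg_left e3 (Real.rpow_nonneg hba.le _)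
          _ = 2 * (b - a) ^ (α - 1) := by ring
      linarith

private theorem ker2 (a b α : ℝ) (hab : a < b) (hα : 0 < α) :
    ∀ s ∈ Icc ((a + b) / 2) b,
      |(s - a) ^ (α - 1) - (b - a) ^ (α - 1)| ≤
        (b - s) ^ (α - 1) - (s - a) ^ (α - 1) + (b - a) ^ (α - 1) := by
  intro s hs
  simp only [mem_Icc] at hs
  have hbs : 0 ≤ b - s := by linarith [hs.2]
  have hsa : 0 < s - a := by linarith [hs.1]
  have hba : (0:ℝ) < b - a := by linarith
  have hsb : s - a ≤ b - a := by linarith [hs.2]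
  have hhalf : (b - a) / 2 ≤ s - a := by linarith [hs.1]
  have hnn : (0:ℝ) ≤ (b - s) ^ (α - 1) := Real.rpow_nonneg hbs _
  rcases le_or_gt 1 α with h1 | h1
  · have : (s - a) ^ (α - 1) ≤ (b - a) ^ (α - 1) :=
      Real.rpow_le_rpow hsa.le hsb (by linarith)
    rw [abs_of_nonpos (by linarith)]
    linarith
  · have hle : (b - a) ^ (α - 1) ≤ (s - a) ^ (α - 1) :=
      Real.rpow_le_rpow_of_nonpos hsa hsb (by linarith)
    rw [abs_of_nonneg (by linarith)]
    rcases eq_or_lt_of_le hs.2 with he | hlt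
    · rw [he]
      simp only [sub_self]
      rw [Real.zero_rpow (by intro h; rw [sub_eq_zero] at h; linarith)]
      linarith
    · have hs2 : (s - a) ^ (α - 1) ≤ (b - s) ^ (α - 1) := by
        apply Real.rpow_le_rpow_of_nonpos (by linarith) (by linarith [hs.1]) (by linarith)
      have hs3 : (s - a) ^ (α - 1) ≤ 2 * (b - a) ^ (α - 1) := by
        have e1 : (s - a) ^ (α - 1) ≤ ((b - a) / 2) ^ (α - 1) :=
          Real.rpow_le_rpow_of_nonpos (by linarith) hhalf (by linarith)
        have e2 : ((b - a) / 2) ^ (α - 1) = (b - a) ^ (α - 1) * (2:ℝ) ^ (1 - α) := by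
          rw [div_eq_mul_inv, Real.mul_rpow hba.le (by norm_num),
            Real.inv_rpow (by norm_num), ← Real.rpow_neg (by norm_num), neg_sub]
        have e3 : (2:ℝ) ^ (1 - α) ≤ 2 := by
          nth_rewrite 2 [← Real.rpow_one 2]
          exact Real.rpow_le_rpow_of_exponent_le one_le_two (by linarith)
        calc (s - a) ^ (α - 1) ≤ (b - a) ^ (α - 1) * (2:ℝ) ^ (1 - α) := by rw [← e2]; exact e1
          _ ≤ (b - a) ^ (α - 1) * 2 :=
            mul_le_mul_of_nonneg_left e3 (Real.rpow_nonneg hba.le _)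
          _ = 2 * (b - a) ^ (α - 1) := by ring
      linarith

private theorem intp1 (a b α : ℝ) (hab : a ≤ b) (hα : 0 < α) (φ : ℝ → ℝ)
    (hφ : ContinuousOn φ (Icc a b)) (c d : ℝ) (hc : c ∈ Icc a b) (hd : d ∈ Icc a b) :
    IntervalIntegrable (fun t => (b - t) ^ (α - 1) * φ t) volume c d := by
  have base : IntervalIntegrable (fun x : ℝ => x ^ (α - 1)) volume 0 (b - a) :=
    intervalIntegral.intervalIntegrable_rpow' (by linarith)
  have comp := base.comp_sub_left b
  simp only [sub_zero, sub_sub_cancel] at comp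
  have onab : IntervalIntegrable (fun t => (b - t) ^ (α - 1) * φ t) volume a b := by
    apply IntervalIntegrable.mul_continuousOn comp.symm
    rwa [uIcc_of_le hab]
  exact onab.mono_set (uIcc_subset_uIcc (by rwa [uIcc_of_le hab]) (by rwa [uIcc_of_le hab]))

private theorem intp2 (a b α : ℝ) (hab : a ≤ b) (hα : 0 < α) (φ : ℝ → ℝ)
    (hφ : ContinuousOn φ (Icc a b)) (c d : ℝ) (hc : c ∈ Icc a b) (hd : d ∈ Icc a b) :
    IntervalIntegrable (fun t => (t - a) ^ (α - 1) * φ t) volume c d := by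
  have base : IntervalIntegrable (fun x : ℝ => x ^ (α - 1)) volume 0 (b - a) :=
    intervalIntegral.intervalIntegrable_rpow' (by linarith)
  have comp := base.comp_sub_right a
  simp only [zero_add, sub_add_cancel] at comp
  have onab : IntervalIntegrable (fun t => (t - a) ^ (α - 1) * φ t) volume a b := by
    apply IntervalIntegrable.mul_continuousOn comp
    rwa [uIcc_of_le hab]
  exact onab.mono_set (uIcc_subset_uIcc (by rwa [uIcc_of_le hab]) (by rwa [uIcc_of_le hab]))

private theorem congr_Ioo (a b c d : ℝ) (hc : c ∈ Icc a b) (hd : d ∈ Icc a b) (Φ Ψ : ℝ → ℝ)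
    (h : ∀ x ∈ Ioo a b, Φ x = Ψ x) :
    (∫ t in c..d, Φ t) = ∫ t in c..d, Ψ t := by
  apply intervalIntegral.integral_congr_ae
  have ha : ∀ᵐ t : ℝ, t ≠ a := by
    rw [Filter.eventually_iff, MeasureTheory.mem_ae_iff]
    simp only [ne_eq, compl_setOf, not_not, setOf_eq_eq_singleton]
    exact Real.volume_singleton
  have hb : ∀ᵐ t : ℝ, t ≠ b := by
    rw [Filter.eventually_iff, MeasureTheory.mem_ae_iff]
    simp only [ne_eq, compl_setOf, not_not, setOf_eq_eq_singleton]
    exact Real.volume_singleton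
  filter_upwards [ha, hb] with t hta htb htmem
  have h1 : t ∈ Icc a b := Set.uIcc_subset_Icc hc hd (Set.uIoc_subset_uIcc htmem)
  exact h t ⟨lt_of_le_of_ne h1.1 (Ne.symm hta), lt_of_le_of_ne h1.2 htb⟩

theorem second_fejer_bound
    (f f' g : ℝ → ℝ) (a b α : ℝ) (hab : a < b) (hα : 0 < α)
    (hf : ∀ x ∈ Set.Ioo a b, HasDerivAt f (f' x) x)
    (hf' : IntervalIntegrable f' MeasureTheory.volume a b)
    (hconv : ConvexOn ℝ (Set.Icc a b) (fun x => |f' x|))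
    (hg : ContinuousOn g (Set.Icc a b)) :
    f ((a + b) / 2) *
        (-((1 / Real.Gamma α) * ∫ t in a..b, (b - t) ^ (α - 1) * g t) -
          (1 / Real.Gamma α) * (∫ t in a..b, (t - a) ^ (α - 1) * g t) +
          (1 / Real.Gamma α) * (∫ t in ((a + b) / 2)..b, (b - t) ^ (α - 1) * g t) +
          (1 / Real.Gamma α) * (∫ t in a..(a + b) / 2, (t - a) ^ (α - 1) * g t) +
          ((b - a) ^ (α - 1) / Real.Gamma α) * ∫ s in a..b, g s) +
      (1 / Real.Gamma α) * (∫ t in a..b, (b - t) ^ (α - 1) * (g t * f t)) +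
      (1 / Real.Gamma α) * (∫ t in a..b, (t - a) ^ (α - 1) * (g t * f t)) -
      (1 / Real.Gamma α) * (∫ t in ((a + b) / 2)..b, (b - t) ^ (α - 1) * (g t * f t)) -
      (1 / Real.Gamma α) * (∫ t in a..(a + b) / 2, (t - a) ^ (α - 1) * (g t * f t)) -
      ((b - a) ^ (α - 1) / Real.Gamma α) * ∫ t in a..b, g t * f t ≤
    (sSup ((fun x => |g x|) '' Set.Icc a ((a + b) / 2)) / ((b - a) * Real.Gamma α)) *
      (∫ t in a..(a + b) / 2,
        (∫ s in a..t, ((b - a) ^ (α - 1) - (b - s) ^ (α - 1) + (s - a) ^ (α - 1))) *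
          ((b - t) * |f' a| + (t - a) * |f' b|)) +
    (sSup ((fun x => |g x|) '' Set.Icc ((a + b) / 2) b) / ((b - a) * Real.Gamma α)) *
      (∫ t in ((a + b) / 2)..b,
        (∫ s in t..b, ((b - s) ^ (α - 1) - (s - a) ^ (α - 1) + (b - a) ^ (α - 1))) *
          ((b - t) * |f' a| + (t - a) * |f' b|)) := by
  set m := (a + b) / 2 with hm
  have ha_m : a < m := by rw [hm]; linarith
  have hm_b : m < b := by rw [hm]; linarith
  have ham : a ≤ m := ha_m.le
  have hmb : m ≤ b := hm_b.le
  have hba : (0:ℝ) < b - a := by linarith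
  have hG : 0 < Real.Gamma α := Real.Gamma_pos_of_pos hα
  have hmIoo : m ∈ Ioo a b := ⟨ha_m, hm_b⟩
  have hmab : m ∈ Icc a b := ⟨ham, hmb⟩
  have haab : a ∈ Icc a b := ⟨le_refl a, hab.le⟩
  have hbab : b ∈ Icc a b := ⟨hab.le, le_refl b⟩
  set F : ℝ → ℝ := fun t => f m + ∫ s in m..t, f' s with hFdef
  have hfF : ∀ x ∈ Ioo a b, f x = F x := by
    intro x hx
    have hsub : uIcc m x ⊆ Ioo a b := Set.ordConnected_Ioo.uIcc_subset hmIoo hx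
    have hsub2 : uIcc m x ⊆ uIcc a b := by
      rw [uIcc_of_le hab.le]
      exact hsub.trans Ioo_subset_Icc_self
    have key : ∫ s in m..x, f' s = f x - f m :=
      intervalIntegral.integral_eq_sub_of_hasDerivAt (fun t ht => hf t (hsub ht))
        (hf'.mono_set hsub2)
    simp [hFdef, key]
  have hFc : ContinuousOn F (Icc a b) := by
    have h1 : ContinuousOn (fun t => ∫ s in m..t, f' s) (uIcc a b) :=
      intervalIntegral.continuousOn_primitive_interval' hf'
        (by rw [uIcc_of_le hab.le]; exact hmab)
    rw [uIcc_of_le hab.le] at h1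
    exact continuousOn_const.add h1
  have hgF : ContinuousOn (fun t => g t * F t) (Icc a b) := hg.mul hFc
  set c0 : ℝ := (b - a) ^ (α - 1) with hc0
  -- integrability facts
  have ig_am : IntervalIntegrable g volume a m :=
    ((hg.mono (Icc_subset_Icc le_rfl hmb)).mono (by rw [uIcc_of_le ham])).intervalIntegrable
  have ig_mb : IntervalIntegrable g volume m b :=
    ((hg.mono (Icc_subset_Icc ham le_rfl)).mono (by rw [uIcc_of_le hmb])).intervalIntegrable
  have igF_am : IntervalIntegrable (fun t => g t * F t) volume a m :=
    ((hgF.mono (Icc_subset_Icc le_rfl hmb)).mono (by rw [uIcc_of_le ham])).intervalIntegrable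
  have igF_mb : IntervalIntegrable (fun t => g t * F t) volume m b :=
    ((hgF.mono (Icc_subset_Icc ham le_rfl)).mono (by rw [uIcc_of_le hmb])).intervalIntegrable
  have ip1g_am := intp1 a b α hab.le hα g hg a m haab hmab
  have ip1g_mb := intp1 a b α hab.le hα g hg m b hmab hbab
  have ip2g_am := intp2 a b α hab.le hα g hg a m haab hmab
  have ip2g_mb := intp2 a b α hab.le hα g hg m b hmab hbab
  have ip1gF_am := intp1 a b α hab.le hα _ hgF a m haab hmab
  have ip1gF_mb := intp1 a b α hab.le hα _ hgF m b hmab hbab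
  have ip2gF_am := intp2 a b α hab.le hα _ hgF a m haab hmab
  have ip2gF_mb := intp2 a b α hab.le hα _ hgF m b hmab hbab
  -- rewrite f-integrals to F and split at m
  have e6 : (∫ t in a..b, (b - t) ^ (α - 1) * (g t * f t)) =
      (∫ t in a..m, (b - t) ^ (α - 1) * (g t * F t)) +
        ∫ t in m..b, (b - t) ^ (α - 1) * (g t * F t) := by
    rw [congr_Ioo a b a b haab hbab _ (fun t => (b - t) ^ (α - 1) * (g t * F t))
      (fun x hx => by rw [hfF x hx])]
    exact (intervalIntegral.integral_add_adjacent_intervals ip1gF_am ip1gF_mb).symm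
  have e7 : (∫ t in a..b, (t - a) ^ (α - 1) * (g t * f t)) =
      (∫ t in a..m, (t - a) ^ (α - 1) * (g t * F t)) +
        ∫ t in m..b, (t - a) ^ (α - 1) * (g t * F t) := by
    rw [congr_Ioo a b a b haab hbab _ (fun t => (t - a) ^ (α - 1) * (g t * F t))
      (fun x hx => by rw [hfF x hx])]
    exact (intervalIntegral.integral_add_adjacent_intervals ip2gF_am ip2gF_mb).symm
  have e8 : (∫ t in m..b, (b - t) ^ (α - 1) * (g t * f t)) =
      ∫ t in m..b, (b - t) ^ (α - 1) * (g t * F t) :=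
    congr_Ioo a b m b hmab hbab _ _ (fun x hx => by rw [hfF x hx])
  have e9 : (∫ t in a..m, (t - a) ^ (α - 1) * (g t * f t)) =
      ∫ t in a..m, (t - a) ^ (α - 1) * (g t * F t) :=
    congr_Ioo a b a m haab hmab _ _ (fun x hx => by rw [hfF x hx])
  have e10 : (∫ t in a..b, g t * f t) =
      (∫ t in a..m, g t * F t) + ∫ t in m..b, g t * F t := by
    rw [congr_Ioo a b a b haab hbab _ (fun t => g t * F t) (fun x hx => by rw [hfF x hx])]
    exact (intervalIntegral.integral_add_adjacent_intervals igF_am igF_mb).symm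
  have e1 : (∫ t in a..b, (b - t) ^ (α - 1) * g t) =
      (∫ t in a..m, (b - t) ^ (α - 1) * g t) + ∫ t in m..b, (b - t) ^ (α - 1) * g t :=
    (intervalIntegral.integral_add_adjacent_intervals ip1g_am ip1g_mb).symm
  have e2 : (∫ t in a..b, (t - a) ^ (α - 1) * g t) =
      (∫ t in a..m, (t - a) ^ (α - 1) * g t) + ∫ t in m..b, (t - a) ^ (α - 1) * g t :=
    (intervalIntegral.integral_add_adjacent_intervals ip2g_am ip2g_mb).symm
  have e5 : (∫ s in a..b, g s) = (∫ t in a..m, g t) + ∫ t in m..b, g t :=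
    (intervalIntegral.integral_add_adjacent_intervals ig_am ig_mb).symm
  -- expansions of A and B
  have eA : (∫ t in a..m, ((b - t) ^ (α - 1) - c0) * (g t * (F t - f m))) =
      (∫ t in a..m, (b - t) ^ (α - 1) * (g t * F t)) -
        f m * (∫ t in a..m, (b - t) ^ (α - 1) * g t) -
        c0 * (∫ t in a..m, g t * F t) + c0 * f m * (∫ t in a..m, g t) := by
    have h1 : (fun t => ((b - t) ^ (α - 1) - c0) * (g t * (F t - f m))) =
        fun t => ((b - t) ^ (α - 1) * (g t * F t) - f m * ((b - t) ^ (α - 1) * g t)) -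
          (c0 * (g t * F t) - c0 * f m * g t) := by
      funext t; ring
    rw [h1, intervalIntegral.integral_sub
        ((ip1gF_am).sub (ip1g_am.const_mul (f m)))
        ((igF_am.const_mul c0).sub (ig_am.const_mul (c0 * f m))),
      intervalIntegral.integral_sub ip1gF_am (ip1g_am.const_mul (f m)),
      intervalIntegral.integral_sub (igF_am.const_mul c0) (ig_am.const_mul (c0 * f m)),
      intervalIntegral.integral_const_mul, intervalIntegral.integral_const_mul,
      intervalIntegral.integral_const_mul]
    ring
  have eB : (∫ t in m..b, ((t - a) ^ (α - 1) - c0) * (g t * (F t - f m))) =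
      (∫ t in m..b, (t - a) ^ (α - 1) * (g t * F t)) -
        f m * (∫ t in m..b, (t - a) ^ (α - 1) * g t) -
        c0 * (∫ t in m..b, g t * F t) + c0 * f m * (∫ t in m..b, g t) := by
    have h1 : (fun t => ((t - a) ^ (α - 1) - c0) * (g t * (F t - f m))) =
        fun t => ((t - a) ^ (α - 1) * (g t * F t) - f m * ((t - a) ^ (α - 1) * g t)) -
          (c0 * (g t * F t) - c0 * f m * g t) := by
      funext t; ring
    rw [h1, intervalIntegral.integral_sub
        ((ip2gF_mb).sub (ip2g_mb.const_mul (f m)))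
        ((igF_mb.const_mul c0).sub (ig_mb.const_mul (c0 * f m))),
      intervalIntegral.integral_sub ip2gF_mb (ip2g_mb.const_mul (f m)),
      intervalIntegral.integral_sub (igF_mb.const_mul c0) (ig_mb.const_mul (c0 * f m)),
      intervalIntegral.integral_const_mul, intervalIntegral.integral_const_mul,
      intervalIntegral.integral_const_mul]
    ring
  -- sup norms
  set M1 : ℝ := sSup ((fun x => |g x|) '' Icc a m) with hM1def
  set M2 : ℝ := sSup ((fun x => |g x|) '' Icc m b) with hM2def
  have hM1 : ∀ x ∈ Icc a m, |g x| ≤ M1 := by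
    intro x hx
    apply le_csSup
    · exact IsCompact.bddAbove_image isCompact_Icc
        (continuous_abs.comp_continuousOn (hg.mono (Icc_subset_Icc le_rfl hmb)))
    · exact ⟨x, hx, rfl⟩
  have hM2 : ∀ x ∈ Icc m b, |g x| ≤ M2 := by
    intro x hx
    apply le_csSup
    · exact IsCompact.bddAbove_image isCompact_Icc
        (continuous_abs.comp_continuousOn (hg.mono (Icc_subset_Icc ham le_rfl)))
    · exact ⟨x, hx, rfl⟩
  have hM1nn : 0 ≤ M1 := (abs_nonneg (g a)).trans (hM1 a ⟨le_refl a, ham⟩)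
  have hM2nn : 0 ≤ M2 := (abs_nonneg (g b)).trans (hM2 b ⟨hmb, le_refl b⟩)
  -- the weight function
  have hhc : Continuous (fun u : ℝ => (b - u) * |f' a| + (u - a) * |f' b|) := by
    exact ((continuous_const.sub continuous_id).mul continuous_const).add
      ((continuous_id.sub continuous_const).mul continuous_const)
  have hhnn : ∀ u ∈ Icc a b, 0 ≤ (b - u) * |f' a| + (u - a) * |f' b| := by
    intro u hu
    have := hu.1; have := hu.2
    exact add_nonneg (mul_nonneg (by linarith) (abs_nonneg _))
      (mul_nonneg (by linarith) (abs_nonneg _))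
  have hfb : ∀ u ∈ Icc a b, |f' u| ≤ ((b - u) * |f' a| + (u - a) * |f' b|) / (b - a) :=
    conv_bound f' a b hab hconv
  -- bound on |F t - f m|
  have habs_int : ∀ t₁ t₂ : ℝ, t₁ ∈ Icc a b → t₂ ∈ Icc a b → t₁ ≤ t₂ →
      |∫ u in t₁..t₂, f' u| ≤
        (∫ u in t₁..t₂, (b - u) * |f' a| + (u - a) * |f' b|) / (b - a) := by
    intro t₁ t₂ h₁ h₂ h₁₂
    have hsub : uIcc t₁ t₂ ⊆ uIcc a b := uIcc_subset_uIcc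
      (by rw [uIcc_of_le hab.le]; exact h₁) (by rw [uIcc_of_le hab.le]; exact h₂)
    calc |∫ u in t₁..t₂, f' u| ≤ ∫ u in t₁..t₂, |f' u| :=
          intervalIntegral.abs_integral_le_integral_abs h₁₂
      _ ≤ ∫ u in t₁..t₂, ((b - u) * |f' a| + (u - a) * |f' b|) / (b - a) := by
          apply intervalIntegral.integral_mono_on h₁₂ ((hf'.mono_set hsub).abs)
            ((hhc.div_const _).intervalIntegrable _ _)
          intro u hu
          exact hfb u ⟨h₁.1.trans hu.1, hu.2.trans h₂.2⟩
      _ = (∫ u in t₁..t₂, (b - u) * |f' a| + (u - a) * |f' b|) / (b - a) :=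
          intervalIntegral.integral_div _ _
  have hFb1 : ∀ t ∈ Icc a m, |F t - f m| ≤
      (∫ u in t..m, (b - u) * |f' a| + (u - a) * |f' b|) / (b - a) := by
    intro t ht
    have h1 : F t - f m = -(∫ u in t..m, f' u) := by
      rw [hFdef]
      simp only [add_sub_cancel_left]
      exact intervalIntegral.integral_symm t m
    rw [h1, abs_neg]
    exact habs_int t m ⟨ht.1, ht.2.trans hmb⟩ hmab ht.2
  have hFb2 : ∀ t ∈ Icc m b, |F t - f m| ≤
      (∫ u in m..t, (b - u) * |f' a| + (u - a) * |f' b|) / (b - a) := by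
    intro t ht
    have h1 : F t - f m = ∫ u in m..t, f' u := by
      rw [hFdef]; simp only [add_sub_cancel_left]
    rw [h1]
    exact habs_int m t hmab ⟨ham.trans ht.1, ht.2⟩ ht.1
  -- continuity of kernels
  have hK1c0 : ContinuousOn (fun t => (b - t) ^ (α - 1) - c0) (Icc a m) := by
    apply ContinuousOn.sub _ continuousOn_const
    apply ContinuousOn.rpow_const (continuous_const.sub continuous_id).continuousOn
    intro x hx
    left
    have := hx.2
    intro hzero
    rw [Pi.sub_apply, sub_eq_zero] at hzero
    simp only [id_eq] at hzero
    have : x < b := lt_of_le_of_lt hx.2 hm_b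
    linarith
  have hK1c : ContinuousOn (fun t => |(b - t) ^ (α - 1) - c0|) (Icc a m) := hK1c0.abs
  have hK2c0 : ContinuousOn (fun t => (t - a) ^ (α - 1) - c0) (Icc m b) := by
    apply ContinuousOn.sub _ continuousOn_const
    apply ContinuousOn.rpow_const (continuous_id.sub continuous_const).continuousOn
    intro x hx
    left
    intro hzero
    rw [Pi.sub_apply, sub_eq_zero] at hzero
    simp only [id_eq] at hzero
    have : a < x := lt_of_lt_of_le ha_m hx.1
    linarith
  have hK2c : ContinuousOn (fun t => |(t - a) ^ (α - 1) - c0|) (Icc m b) := hK2c0.abs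
  -- conversion helpers to interval integrability
  have toII1 : ∀ φ : ℝ → ℝ, ContinuousOn φ (Icc a m) → IntervalIntegrable φ volume a m :=
    fun φ hφ => (by rwa [uIcc_of_le ham] : ContinuousOn φ (uIcc a m)).intervalIntegrable
  have toII2 : ∀ φ : ℝ → ℝ, ContinuousOn φ (Icc m b) → IntervalIntegrable φ volume m b :=
    fun φ hφ => (by rwa [uIcc_of_le hmb] : ContinuousOn φ (uIcc m b)).intervalIntegrable
  -- integrability of comparison kernels
  have iL1 : IntervalIntegrable
      (fun s => c0 - (b - s) ^ (α - 1) + (s - a) ^ (α - 1)) volume a m := by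
    have i1 := intp1 a b α hab.le hα (fun _ => (1:ℝ)) continuousOn_const a m haab hmab
    have i2 := intp2 a b α hab.le hα (fun _ => (1:ℝ)) continuousOn_const a m haab hmab
    simp only [mul_one] at i1 i2
    exact (intervalIntegrable_const.sub i1).add i2
  have iL2 : IntervalIntegrable
      (fun s => (b - s) ^ (α - 1) - (s - a) ^ (α - 1) + c0) volume m b := by
    have i1 := intp1 a b α hab.le hα (fun _ => (1:ℝ)) continuousOn_const m b hmab hbab
    have i2 := intp2 a b α hab.le hα (fun _ => (1:ℝ)) continuousOn_const m b hmab hbab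
    simp only [mul_one] at i1 i2
    exact (i1.sub i2).add intervalIntegrable_const
  have hL1prim : ContinuousOn
      (fun u => ∫ s in a..u, (c0 - (b - s) ^ (α - 1) + (s - a) ^ (α - 1))) (Icc a m) := by
    have := intervalIntegral.continuousOn_primitive_interval' iL1 left_mem_uIcc
    rwa [uIcc_of_le ham] at this
  have hL2prim : ContinuousOn
      (fun u => ∫ s in u..b, ((b - s) ^ (α - 1) - (s - a) ^ (α - 1) + c0)) (Icc m b) := by
    have := intervalIntegral.continuousOn_primitive_interval_left
      (a := m) (b := b) ((intervalIntegrable_iff_integrableOn_Icc_of_le hmb).mp iL2 |>.mono_set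
        (by rw [uIcc_of_le hmb]))
    rwa [uIcc_of_le hmb] at this
  -- continuity of inner h-primitives
  have hHm1 : Continuous (fun t : ℝ => ∫ u in t..m, (b - u) * |f' a| + (u - a) * |f' b|) := by
    have heq : (fun t : ℝ => ∫ u in t..m, (b - u) * |f' a| + (u - a) * |f' b|) =
        fun t => -∫ u in m..t, (b - u) * |f' a| + (u - a) * |f' b| :=
      funext fun t => intervalIntegral.integral_symm m t
    rw [heq]
    exact (intervalIntegral.continuous_primitive (fun c d => hhc.intervalIntegrable c d) m).neg
  have hHm2 : Continuous (fun t : ℝ => ∫ u in m..t, (b - u) * |f' a| + (u - a) * |f' b|) :=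
    intervalIntegral.continuous_primitive (fun c d => hhc.intervalIntegrable c d) m
  have hK1prim : ContinuousOn (fun u => ∫ t in a..u, |(b - t) ^ (α - 1) - c0|) (Icc a m) := by
    have := intervalIntegral.continuousOn_primitive_interval' (toII1 _ hK1c) left_mem_uIcc
    rwa [uIcc_of_le ham] at this
  have hK2prim : ContinuousOn (fun u => ∫ t in u..b, |(t - a) ^ (α - 1) - c0|) (Icc m b) := by
    have := intervalIntegral.continuousOn_primitive_interval_left
      (a := m) (b := b) ((intervalIntegrable_iff_integrableOn_Icc_of_le hmb).mp
        (toII2 _ hK2c) |>.mono_set (by rw [uIcc_of_le hmb]))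
    rwa [uIcc_of_le hmb] at this
  have k1 := ker1 a b α hab hα
  have k2 := ker2 a b α hab hα
  rw [← hm] at k1 k2
  -- the main bound on the first half
  have boundA : (∫ t in a..m, ((b - t) ^ (α - 1) - c0) * (g t * (F t - f m))) ≤
      (M1 / (b - a)) * ∫ t in a..m,
        (∫ s in a..t, (c0 - (b - s) ^ (α - 1) + (s - a) ^ (α - 1))) *
          ((b - t) * |f' a| + (t - a) * |f' b|) := by
    have intA_left : IntervalIntegrable
        (fun t => ((b - t) ^ (α - 1) - c0) * (g t * (F t - f m))) volume a m :=
      toII1 _ (hK1c0.mul ((hg.mono (Icc_subset_Icc le_rfl hmb)).mul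
        ((hFc.mono (Icc_subset_Icc le_rfl hmb)).sub continuousOn_const)))
    have intA_right : IntervalIntegrable (fun t => |(b - t) ^ (α - 1) - c0| *
        (M1 * ((∫ u in t..m, (b - u) * |f' a| + (u - a) * |f' b|) / (b - a)))) volume a m :=
      toII1 _ (hK1c.mul (continuous_const.mul (hHm1.div_const _)).continuousOn)
    calc (∫ t in a..m, ((b - t) ^ (α - 1) - c0) * (g t * (F t - f m)))
        ≤ ∫ t in a..m, |(b - t) ^ (α - 1) - c0| *
            (M1 * ((∫ u in t..m, (b - u) * |f' a| + (u - a) * |f' b|) / (b - a))) := by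
          apply intervalIntegral.integral_mono_on ham intA_left intA_right
          intro t ht
          calc ((b - t) ^ (α - 1) - c0) * (g t * (F t - f m))
              ≤ |((b - t) ^ (α - 1) - c0) * (g t * (F t - f m))| := le_abs_self _
            _ = |(b - t) ^ (α - 1) - c0| * (|g t| * |F t - f m|) := by
                rw [abs_mul, abs_mul]
            _ ≤ |(b - t) ^ (α - 1) - c0| *
                (M1 * ((∫ u in t..m, (b - u) * |f' a| + (u - a) * |f' b|) / (b - a))) :=
              mul_le_mul_of_nonneg_left
                (mul_le_mul (hM1 t ht) (hFb1 t ht) (abs_nonneg _) hM1nn) (abs_nonneg _)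
      _ = (M1 / (b - a)) * ∫ t in a..m, |(b - t) ^ (α - 1) - c0| *
            (∫ u in t..m, (b - u) * |f' a| + (u - a) * |f' b|) := by
          rw [← intervalIntegral.integral_const_mul]
          apply intervalIntegral.integral_congr
          intro t _
          show |(b - t) ^ (α - 1) - c0| * (M1 * (_ / (b - a))) = M1 / (b - a) * _
          ring
      _ = (M1 / (b - a)) * ∫ u in a..m, (∫ t in a..u, |(b - t) ^ (α - 1) - c0|) *
            ((b - u) * |f' a| + (u - a) * |f' b|) := by
          rw [tri_swap a m ham _ _ hK1c hhc.continuousOn]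
      _ ≤ (M1 / (b - a)) * ∫ t in a..m,
            (∫ s in a..t, (c0 - (b - s) ^ (α - 1) + (s - a) ^ (α - 1))) *
              ((b - t) * |f' a| + (t - a) * |f' b|) := by
          apply mul_le_mul_of_nonneg_left _ (div_nonneg hM1nn hba.le)
          apply intervalIntegral.integral_mono_on ham
            (toII1 _ (hK1prim.mul hhc.continuousOn))
            (toII1 _ (hL1prim.mul hhc.continuousOn))
          intro u hu
          apply mul_le_mul_of_nonneg_right _ (hhnn u ⟨hu.1, hu.2.trans hmb⟩)
          apply intervalIntegral.integral_mono_on hu.1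
            ((by rw [uIcc_of_le hu.1]; exact hK1c.mono (Icc_subset_Icc le_rfl hu.2) :
              ContinuousOn (fun t => |(b - t) ^ (α - 1) - c0|) (uIcc a u)).intervalIntegrable)
            (iL1.mono_set (uIcc_subset_uIcc (by rw [uIcc_of_le ham]; exact ⟨le_refl a, ham⟩)
              (by rw [uIcc_of_le ham]; exact hu)))
          intro s hs
          exact k1 s ⟨hs.1, hs.2.trans hu.2⟩
  -- the main bound on the second half
  have boundB : (∫ t in m..b, ((t - a) ^ (α - 1) - c0) * (g t * (F t - f m))) ≤
      (M2 / (b - a)) * ∫ t in m..b,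
        (∫ s in t..b, ((b - s) ^ (α - 1) - (s - a) ^ (α - 1) + c0)) *
          ((b - t) * |f' a| + (t - a) * |f' b|) := by
    have intB_left : IntervalIntegrable
        (fun t => ((t - a) ^ (α - 1) - c0) * (g t * (F t - f m))) volume m b :=
      toII2 _ (hK2c0.mul ((hg.mono (Icc_subset_Icc ham le_rfl)).mul
        ((hFc.mono (Icc_subset_Icc ham le_rfl)).sub continuousOn_const)))
    have intB_right : IntervalIntegrable (fun t => |(t - a) ^ (α - 1) - c0| *
        (M2 * ((∫ u in m..t, (b - u) * |f' a| + (u - a) * |f' b|) / (b - a)))) volume m b :=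
      toII2 _ (hK2c.mul (continuous_const.mul (hHm2.div_const _)).continuousOn)
    calc (∫ t in m..b, ((t - a) ^ (α - 1) - c0) * (g t * (F t - f m)))
        ≤ ∫ t in m..b, |(t - a) ^ (α - 1) - c0| *
            (M2 * ((∫ u in m..t, (b - u) * |f' a| + (u - a) * |f' b|) / (b - a))) := by
          apply intervalIntegral.integral_mono_on hmb intB_left intB_right
          intro t ht
          calc ((t - a) ^ (α - 1) - c0) * (g t * (F t - f m))
              ≤ |((t - a) ^ (α - 1) - c0) * (g t * (F t - f m))| := le_abs_self _
            _ = |(t - a) ^ (α - 1) - c0| * (|g t| * |F t - f m|) := by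
                rw [abs_mul, abs_mul]
            _ ≤ |(t - a) ^ (α - 1) - c0| *
                (M2 * ((∫ u in m..t, (b - u) * |f' a| + (u - a) * |f' b|) / (b - a))) :=
              mul_le_mul_of_nonneg_left
                (mul_le_mul (hM2 t ht) (hFb2 t ht) (abs_nonneg _) hM2nn) (abs_nonneg _)
      _ = (M2 / (b - a)) * ∫ t in m..b, ((b - t) * |f' a| + (t - a) * |f' b|) *
            (∫ u in t..b, |(u - a) ^ (α - 1) - c0|) := by
          rw [tri_swap m b hmb (fun u => (b - u) * |f' a| + (u - a) * |f' b|)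
            (fun t => |(t - a) ^ (α - 1) - c0|) hhc.continuousOn hK2c,
            ← intervalIntegral.integral_const_mul]
          apply intervalIntegral.integral_congr
          intro t _
          show |(t - a) ^ (α - 1) - c0| * (M2 * (_ / (b - a))) =
            M2 / (b - a) * ((∫ u in m..t, (b - u) * |f' a| + (u - a) * |f' b|) *
              |(t - a) ^ (α - 1) - c0|)
          ring
      _ ≤ (M2 / (b - a)) * ∫ t in m..b,
            (∫ s in t..b, ((b - s) ^ (α - 1) - (s - a) ^ (α - 1) + c0)) *
              ((b - t) * |f' a| + (t - a) * |f' b|) := by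
          apply mul_le_mul_of_nonneg_left _ (div_nonneg hM2nn hba.le)
          apply intervalIntegral.integral_mono_on hmb
            (toII2 _ (hhc.continuousOn.mul hK2prim))
            (toII2 _ (hL2prim.mul hhc.continuousOn))
          intro u hu
          rw [mul_comm]
          apply mul_le_mul_of_nonneg_right _ (hhnn u ⟨ham.trans hu.1, hu.2⟩)
          apply intervalIntegral.integral_mono_on hu.2
            ((by rw [uIcc_of_le hu.2]; exact hK2c.mono (Icc_subset_Icc hu.1 le_rfl) :
              ContinuousOn (fun t => |(t - a) ^ (α - 1) - c0|) (uIcc u b)).intervalIntegrable)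
            (iL2.mono_set (uIcc_subset_uIcc (by rw [uIcc_of_le hmb]; exact hu)
              (by rw [uIcc_of_le hmb]; exact ⟨hmb, le_refl b⟩)))
          intro s hs
          exact k2 s ⟨hu.1.trans hs.1, hs.2⟩
  -- final assembly
  have hfinal : (1 / Real.Gamma α) *
      ((∫ t in a..m, ((b - t) ^ (α - 1) - c0) * (g t * (F t - f m))) +
        ∫ t in m..b, ((t - a) ^ (α - 1) - c0) * (g t * (F t - f m))) ≤
      M1 / ((b - a) * Real.Gamma α) *
        (∫ t in a..m, (∫ s in a..t, (c0 - (b - s) ^ (α - 1) + (s - a) ^ (α - 1))) *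
          ((b - t) * |f' a| + (t - a) * |f' b|)) +
      M2 / ((b - a) * Real.Gamma α) *
        (∫ t in m..b, (∫ s in t..b, ((b - s) ^ (α - 1) - (s - a) ^ (α - 1) + c0)) *
          ((b - t) * |f' a| + (t - a) * |f' b|)) := by
    calc (1 / Real.Gamma α) * _ ≤ (1 / Real.Gamma α) *
        ((M1 / (b - a)) * (∫ t in a..m,
            (∫ s in a..t, (c0 - (b - s) ^ (α - 1) + (s - a) ^ (α - 1))) *
              ((b - t) * |f' a| + (t - a) * |f' b|)) +
          (M2 / (b - a)) * (∫ t in m..b,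
            (∫ s in t..b, ((b - s) ^ (α - 1) - (s - a) ^ (α - 1) + c0)) *
              ((b - t) * |f' a| + (t - a) * |f' b|))) :=
        mul_le_mul_of_nonneg_left (add_le_add boundA boundB) (by positivity)
      _ = _ := by
        have hcomb : ∀ x y : ℝ, (1 / Real.Gamma α) *
            ((M1 / (b - a)) * x + (M2 / (b - a)) * y) =
            M1 / ((b - a) * Real.Gamma α) * x + M2 / ((b - a) * Real.Gamma α) * y := by
          intro x y
          rw [mul_add, ← mul_assoc, ← mul_assoc]
          congr 2 <;> · rw [div_mul_div_comm, one_mul, mul_comm (Real.Gamma α)]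
        exact hcomb _ _
  refine le_trans (le_of_eq ?_) hfinal
  rw [e6, e7, e8, e9, e10, e1, e2, e5, eA, eB]
  ring
end
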